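/- Let p(x) = p₃x³ + p₂x² + p₁x + p₀ be a real cubic polynomial with p₃ > 0 and p₀ ≥ 0. Suppose σ := p₂² − 3p₁p₃ > 0, p₁p₂ − 9p₀p₃ < 0, and 4p₂(p₁p₂ − 9p₀p₃) < 4p₁σ + 3p₃(p₁p₂ − 9p₀p₃)²/σ. Then p(x) ≥ 0 for all x ≥ 0. -/
import Mathlib

set_option maxHeartbeats 1000000

/-- Auxiliary: the depressed-cubic coefficient bound. -/
lemma stmt_4_aux (s p₂ d : ℝ) (hs : 0 < s) (h1 : 2 * s ^ 2 * p₂ < d)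
    (h2 : 3 * s ^ 2 * p₂ - p₂ ^ 3 ≤ d) (h3 : 4 * s ^ 6 < d ^ 2) :
    2 * s ^ 3 ≤ d := by
  by_contra h
  push_neg at h
  have hneg : d < -(2 * s ^ 3) := by nlinarith [sq_nonneg (d + 2 * s ^ 3), sq_nonneg s]
  have hp2 : p₂ < -s := by nlinarith [pow_pos hs 2, pow_pos hs 3]
  nlinarith [sq_nonneg (p₂ + s), mul_pos hs hs, sq_nonneg s]

/-- sufficient condition (b) for nonnegativity of a cubic on `[0, ∞)`. -/
theorem stmt_4 (p₀ p₁ p₂ p₃ : ℝ) (h₃ : 0 < p₃) (h₀ : 0 ≤ p₀)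
    (hσ : 0 < p₂ ^ 2 - 3 * p₁ * p₃)
    (hτ : p₁ * p₂ - 9 * p₀ * p₃ < 0)
    (hc : 4 * p₂ * (p₁ * p₂ - 9 * p₀ * p₃) <
      4 * p₁ * (p₂ ^ 2 - 3 * p₁ * p₃) +
      3 * p₃ * (p₁ * p₂ - 9 * p₀ * p₃) ^ 2 / (p₂ ^ 2 - 3 * p₁ * p₃)) :
    ∀ x : ℝ, 0 ≤ x → 0 ≤ p₃ * x ^ 3 + p₂ * x ^ 2 + p₁ * x + p₀ := by
  intro x hx
  set s : ℝ := Real.sqrt (p₂ ^ 2 - 3 * p₁ * p₃) with hsdef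
  have hs0 : 0 < s := Real.sqrt_pos.mpr hσ
  have hs2 : s ^ 2 = p₂ ^ 2 - 3 * p₁ * p₃ := Real.sq_sqrt hσ.le
  set d : ℝ := 2 * p₂ ^ 3 - 9 * p₁ * p₂ * p₃ + 27 * p₀ * p₃ ^ 2 with hddef
  set u : ℝ := 3 * p₃ * x + p₂ with hudef
  -- translate hypotheses
  have h1 : 2 * s ^ 2 * p₂ < d := by
    have : p₃ * (p₁ * p₂ - 9 * p₀ * p₃) < 0 := mul_neg_of_pos_of_neg h₃ hτ
    rw [hs2]; nlinarith [this]
  have h2 : 3 * s ^ 2 * p₂ - p₂ ^ 3 ≤ d := by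
    have : 0 ≤ p₀ * p₃ ^ 2 := mul_nonneg h₀ (sq_nonneg p₃)
    rw [hs2]; nlinarith [this]
  have h3 : 4 * s ^ 6 < d ^ 2 := by
    have hσ' := hσ
    have hcl : (4 * p₂ * (p₁ * p₂ - 9 * p₀ * p₃) - 4 * p₁ * (p₂ ^ 2 - 3 * p₁ * p₃)) *
        (p₂ ^ 2 - 3 * p₁ * p₃) < 3 * p₃ * (p₁ * p₂ - 9 * p₀ * p₃) ^ 2 := by
      rw [← lt_div_iff₀ hσ']
      linarith [hc]
    have key : 0 < p₃ * (4 * p₁ * (p₂ ^ 2 - 3 * p₁ * p₃) ^ 2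
        - 4 * p₂ * (p₁ * p₂ - 9 * p₀ * p₃) * (p₂ ^ 2 - 3 * p₁ * p₃)
        + 3 * p₃ * (p₁ * p₂ - 9 * p₀ * p₃) ^ 2) := by
      apply mul_pos h₃; nlinarith [hcl]
    have hid : p₃ * (4 * p₁ * (p₂ ^ 2 - 3 * p₁ * p₃) ^ 2
        - 4 * p₂ * (p₁ * p₂ - 9 * p₀ * p₃) * (p₂ ^ 2 - 3 * p₁ * p₃)
        + 3 * p₃ * (p₁ * p₂ - 9 * p₀ * p₃) ^ 2) * 3
        = d ^ 2 - 4 * (p₂ ^ 2 - 3 * p₁ * p₃) ^ 3 := by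
      rw [hddef]; ring
    have hs6 : s ^ 6 = (p₂ ^ 2 - 3 * p₁ * p₃) ^ 3 := by
      rw [← hs2]; ring
    nlinarith [key, hid, hs6]
  have dge : 2 * s ^ 3 ≤ d := stmt_4_aux s p₂ d hs0 h1 h2 h3
  -- key inequality for the depressed cubic
  have key : 0 ≤ u ^ 3 - 3 * s ^ 2 * u + d := by
    rcases le_or_gt (-s) u with hu | hu
    · have h2s : 0 ≤ u + 2 * s := by linarith
      nlinarith [mul_nonneg (sq_nonneg (u - s)) h2s]
    · have hup : p₂ ≤ u := by
        rw [hudef]; nlinarith [mul_nonneg h₃.le hx]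
      have hpu : p₂ ≤ -s := le_trans hup hu.le
      have hq : 0 ≤ u ^ 2 + u * p₂ + p₂ ^ 2 - 3 * s ^ 2 := by
        nlinarith [mul_nonneg (by linarith : (0:ℝ) ≤ -s - u) (by linarith : (0:ℝ) ≤ -s - p₂),
          mul_nonneg (by linarith : (0:ℝ) ≤ -s - u) hs0.le,
          mul_nonneg (by linarith : (0:ℝ) ≤ -s - p₂) hs0.le]
      have hgp2 : p₂ ^ 3 - 3 * s ^ 2 * p₂ + d = 27 * p₀ * p₃ ^ 2 := by
        rw [hs2, hddef]; ring
      have hfac : u ^ 3 - 3 * s ^ 2 * u + d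
          = (u - p₂) * (u ^ 2 + u * p₂ + p₂ ^ 2 - 3 * s ^ 2) + (p₂ ^ 3 - 3 * s ^ 2 * p₂ + d) := by
        ring
      rw [hfac, hgp2]
      have : 0 ≤ (u - p₂) * (u ^ 2 + u * p₂ + p₂ ^ 2 - 3 * s ^ 2) :=
        mul_nonneg (by linarith) hq
      nlinarith [mul_nonneg h₀ (sq_nonneg p₃)]
  -- conclude
  have hid2 : u ^ 3 - 3 * s ^ 2 * u + d
      = 27 * p₃ ^ 2 * (p₃ * x ^ 3 + p₂ * x ^ 2 + p₁ * x + p₀) := by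
    rw [hudef, hs2, hddef]; ring
  rw [hid2] at key
  nlinarith [key, mul_pos h₃ h₃]
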